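/- The function κ_d(x) := (x^d / d!) · (1 − e^{−x} Σ_{j=0}^{d−1} x^j/j!)^{−1} defined for x > 0 satisfies lim_{x→0⁺} κ_d(x) = 1 and is strictly increasing on (0,∞). -/

import Mathlib

open Filter

/-- `κ_d(x) = (x^d/d!) (1 − e^{−x} Σ_{j<d} x^j/j!)⁻¹`. -/
noncomputable def kappa (d : ℕ) (x : ℝ) : ℝ :=
  x ^ d / (d.factorial : ℝ) *
    (1 - Real.exp (-x) * ∑ j ∈ Finset.range d, x ^ j / (j.factorial : ℝ))⁻¹

noncomputable def Fden (d : ℕ) (x : ℝ) : ℝ :=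
  1 - Real.exp (-x) * ∑ j ∈ Finset.range d, x ^ j / (j.factorial : ℝ)

lemma hasDerivAt_S (d : ℕ) (x : ℝ) :
    HasDerivAt (fun x : ℝ => ∑ j ∈ Finset.range d, x ^ j / (j.factorial : ℝ))
      (∑ j ∈ Finset.range (d - 1), x ^ j / (j.factorial : ℝ)) x := by
  have h : HasDerivAt (fun x : ℝ => ∑ j ∈ Finset.range d, x ^ j / (j.factorial : ℝ))
      (∑ j ∈ Finset.range d, (↑j * x ^ (j - 1)) / (j.factorial : ℝ)) x := by
    apply HasDerivAt.fun_sum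
    intro j _
    exact (hasDerivAt_pow j x).div_const _
  convert h using 1
  cases d with
  | zero => simp
  | succ m =>
    rw [Finset.sum_range_succ']
    simp only [Nat.succ_sub_one]
    have : ∀ i : ℕ, (↑(i + 1) * x ^ i) / ((i + 1).factorial : ℝ)
        = x ^ i / (i.factorial : ℝ) := by
      intro i
      rw [Nat.factorial_succ]
      push_cast
      have h1 : (i.factorial : ℝ) ≠ 0 := Nat.cast_ne_zero.mpr i.factorial_ne_zero
      have h2 : (i : ℝ) + 1 ≠ 0 := by positivity
      field_simp
    rw [Finset.sum_congr rfl (fun i _ => this i)]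
    simp

lemma hasDerivAt_Fden (d : ℕ) (hd : 1 ≤ d) (x : ℝ) :
    HasDerivAt (Fden d) (Real.exp (-x) * x ^ (d - 1) / ((d - 1).factorial : ℝ)) x := by
  have hexp : HasDerivAt (fun x : ℝ => Real.exp (-x)) (-Real.exp (-x)) x := by
    simpa [Function.comp_def] using (Real.hasDerivAt_exp (-x)).comp x (hasDerivAt_neg x)
  have h := (hasDerivAt_const x (1:ℝ)).sub (hexp.mul (hasDerivAt_S d x))
  refine h.congr_deriv ?_
  obtain ⟨m, rfl⟩ : ∃ m, d = m + 1 := ⟨d - 1, (Nat.succ_pred_eq_of_pos hd).symm⟩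
  simp only [Nat.add_sub_cancel]
  rw [Finset.sum_range_succ]
  ring

lemma Fden_zero (d : ℕ) (hd : 1 ≤ d) : Fden d 0 = 0 := by
  obtain ⟨m, rfl⟩ : ∃ m, d = m + 1 := ⟨d - 1, (Nat.succ_pred_eq_of_pos hd).symm⟩
  simp [Fden, Finset.sum_range_succ']

lemma Fden_pos (d : ℕ) (hd : 1 ≤ d) {x : ℝ} (hx : 0 < x) : 0 < Fden d x := by
  have hmono : StrictMonoOn (Fden d) (Set.Ici 0) := by
    apply strictMonoOn_of_deriv_pos (convex_Ici 0)
    · exact fun y _ => ((hasDerivAt_Fden d hd y).differentiableAt.continuousAt).continuousWithinAt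
    · intro y hy
      rw [interior_Ici] at hy
      rw [(hasDerivAt_Fden d hd y).deriv]
      have : (0:ℝ) < y ^ (d-1) := pow_pos hy _
      positivity
  have := hmono (Set.self_mem_Ici) (Set.mem_Ici.mpr hx.le) hx
  rwa [Fden_zero d hd] at this

noncomputable def phiAux (d : ℕ) (x : ℝ) : ℝ :=
  Real.exp (-x) * x ^ d / ((d - 1).factorial : ℝ) - d * Fden d x

lemma hasDerivAt_phiAux (d : ℕ) (hd : 1 ≤ d) (x : ℝ) :
    HasDerivAt (phiAux d) (-(Real.exp (-x) * x ^ d / ((d - 1).factorial : ℝ))) x := by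
  have hexp : HasDerivAt (fun x : ℝ => Real.exp (-x)) (-Real.exp (-x)) x := by
    simpa [Function.comp_def] using (Real.hasDerivAt_exp (-x)).comp x (hasDerivAt_neg x)
  have h := (((hexp.mul (hasDerivAt_pow d x)).div_const ((d-1).factorial : ℝ)).sub
    ((hasDerivAt_Fden d hd x).const_mul (d:ℝ)))
  refine h.congr_deriv ?_
  obtain ⟨m, rfl⟩ : ∃ m, d = m + 1 := ⟨d - 1, (Nat.succ_pred_eq_of_pos hd).symm⟩
  simp only [Nat.add_sub_cancel]
  push_cast
  ring

lemma phiAux_neg (d : ℕ) (hd : 1 ≤ d) {x : ℝ} (hx : 0 < x) : phiAux d x < 0 := by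
  have hanti : StrictAntiOn (phiAux d) (Set.Ici 0) := by
    apply strictAntiOn_of_deriv_neg (convex_Ici 0)
    · exact fun y _ => ((hasDerivAt_phiAux d hd y).differentiableAt.continuousAt).continuousWithinAt
    · intro y hy
      rw [interior_Ici] at hy
      rw [(hasDerivAt_phiAux d hd y).deriv]
      have : (0:ℝ) < y ^ d := pow_pos hy _
      have : (0:ℝ) < Real.exp (-y) * y ^ d / ((d-1).factorial : ℝ) := by positivity
      linarith
  have h0 : phiAux d 0 = 0 := by
    simp [phiAux, Fden_zero d hd, zero_pow (by omega : d ≠ 0)]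
  have := hanti (Set.self_mem_Ici) (Set.mem_Ici.mpr hx.le) hx
  rwa [h0] at this


lemma kappa_eq (d : ℕ) : kappa d = fun x => x ^ d / (d.factorial : ℝ) * (Fden d x)⁻¹ := rfl

theorem kappa_tendsto_one_and_strictMono' (d : ℕ) (hd : 1 ≤ d) :
    Tendsto (kappa d) (nhdsWithin 0 (Set.Ioi 0)) (nhds 1) ∧
      StrictMonoOn (kappa d) (Set.Ioi 0) := by
  obtain ⟨m, rfl⟩ : ∃ m, d = m + 1 := ⟨d - 1, (Nat.succ_pred_eq_of_pos hd).symm⟩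
  set d := m + 1 with hdm
  -- derivative of kappa on Ioi 0
  have hfact : ((d - 1).factorial : ℝ) ≠ 0 := Nat.cast_ne_zero.mpr (d-1).factorial_ne_zero
  have hfact' : ((d).factorial : ℝ) ≠ 0 := Nat.cast_ne_zero.mpr d.factorial_ne_zero
  have hK : ∀ x ∈ Set.Ioi (0:ℝ), HasDerivAt (kappa d)
      (x ^ (d-1) * ((d:ℝ) * Fden d x - x * (Real.exp (-x) * x ^ (d-1) / ((d-1).factorial : ℝ)))
        / ((d.factorial : ℝ) * (Fden d x) ^ 2)) x := by
    intro x hx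
    have hx : (0:ℝ) < x := hx
    have hA : 0 < Fden d x := Fden_pos d hd hx
    have h1 := (hasDerivAt_pow d x).div_const (d.factorial : ℝ)
    have h2 := (hasDerivAt_Fden d hd x).inv (ne_of_gt hA)
    have h := h1.mul h2
    rw [kappa_eq]
    refine h.congr_deriv ?_
    have hxd : x ^ d = x * x ^ (d - 1) := by
      simp only [hdm, Nat.succ_sub_one]
      rw [pow_succ']
    rw [hxd, Pi.inv_apply]
    field_simp
    ring
  have hKpos : ∀ x ∈ Set.Ioi (0:ℝ),
      0 < x ^ (d-1) * ((d:ℝ) * Fden d x - x * (Real.exp (-x) * x ^ (d-1) / ((d-1).factorial : ℝ)))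
        / ((d.factorial : ℝ) * (Fden d x) ^ 2) := by
    intro x hx
    have hx : (0:ℝ) < x := hx
    have hA : 0 < Fden d x := Fden_pos d hd hx
    have hphi := phiAux_neg d hd hx
    have hxB : x * (Real.exp (-x) * x ^ (d-1) / ((d-1).factorial : ℝ))
        = Real.exp (-x) * x ^ d / ((d-1).factorial : ℝ) := by
      have hxd : x ^ d = x * x ^ (d - 1) := by
        simp only [hdm, Nat.succ_sub_one]; rw [pow_succ']
      rw [hxd]; ring
    rw [hxB]
    have hnum : 0 < (d:ℝ) * Fden d x - Real.exp (-x) * x ^ d / ((d-1).factorial : ℝ) := by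
      have : phiAux d x = Real.exp (-x) * x ^ d / ((d-1).factorial : ℝ) - d * Fden d x := rfl
      linarith [hphi, this ▸ hphi]
    have hxp : (0:ℝ) < x ^ (d-1) := pow_pos hx _
    have hdf : (0:ℝ) < (d.factorial : ℝ) := Nat.cast_pos.mpr d.factorial_pos
    positivity
  constructor
  · -- limit via L'Hôpital
    have hff' : ∀ᶠ x in nhdsWithin 0 (Set.Ioi 0),
        HasDerivAt (fun x : ℝ => x ^ d / (d.factorial : ℝ)) ((d:ℝ) * x ^ (d-1) / (d.factorial : ℝ)) x :=
      Filter.Eventually.of_forall fun x => (hasDerivAt_pow d x).div_const _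
    have hgg' : ∀ᶠ x in nhdsWithin 0 (Set.Ioi 0),
        HasDerivAt (Fden d) (Real.exp (-x) * x ^ (d-1) / ((d-1).factorial : ℝ)) x :=
      Filter.Eventually.of_forall fun x => hasDerivAt_Fden d hd x
    have hg' : ∀ᶠ x in nhdsWithin 0 (Set.Ioi 0),
        Real.exp (-x) * x ^ (d-1) / ((d-1).factorial : ℝ) ≠ 0 := by
      filter_upwards [self_mem_nhdsWithin] with x hx
      have hx : (0:ℝ) < x := hx
      have : (0:ℝ) < x ^ (d-1) := pow_pos hx _
      positivity
    have hfa : Tendsto (fun x : ℝ => x ^ d / (d.factorial : ℝ)) (nhdsWithin 0 (Set.Ioi 0)) (nhds 0) := by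
      apply tendsto_nhdsWithin_of_tendsto_nhds
      have : Continuous (fun x : ℝ => x ^ d / (d.factorial : ℝ)) := by continuity
      have h0 : (0:ℝ) ^ d / (d.factorial : ℝ) = 0 := by
        rw [zero_pow (by omega : d ≠ 0)]; simp
      exact this.tendsto' 0 0 h0
    have hga : Tendsto (Fden d) (nhdsWithin 0 (Set.Ioi 0)) (nhds 0) := by
      apply tendsto_nhdsWithin_of_tendsto_nhds
      have hc : Continuous (Fden d) := by
        have : Differentiable ℝ (Fden d) := fun x => (hasDerivAt_Fden d hd x).differentiableAt
        exact this.continuous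
      exact hc.tendsto' 0 0 (Fden_zero d hd)
    have hdiv : Tendsto (fun x => ((d:ℝ) * x ^ (d-1) / (d.factorial : ℝ))
        / (Real.exp (-x) * x ^ (d-1) / ((d-1).factorial : ℝ))) (nhdsWithin 0 (Set.Ioi 0)) (nhds 1) := by
      have hexp : Tendsto Real.exp (nhdsWithin 0 (Set.Ioi 0)) (nhds 1) := by
        apply tendsto_nhdsWithin_of_tendsto_nhds
        simpa using Real.continuous_exp.tendsto 0
      apply hexp.congr'
      filter_upwards [self_mem_nhdsWithin] with x hx
      have hx : (0:ℝ) < x := hx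
      have hxp : x ^ (d-1) ≠ 0 := ne_of_gt (pow_pos hx _)
      have hde : (d.factorial : ℝ) = d * ((d-1).factorial : ℝ) := by
        simp only [hdm, Nat.succ_sub_one, Nat.factorial_succ]; push_cast; ring
      rw [hde, Real.exp_neg]
      have hexpne : Real.exp x ≠ 0 := (Real.exp_pos x).ne'
      have hdne : (d:ℝ) ≠ 0 := by positivity
      field_simp
    have := HasDerivAt.lhopital_zero_nhdsGT hff' hgg' hg' hfa hga hdiv
    refine this.congr fun x => ?_
    rw [kappa_eq, div_eq_mul_inv]
  · apply strictMonoOn_of_deriv_pos (convex_Ioi 0)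
    · intro x hx
      exact ((hK x hx).differentiableAt.continuousAt).continuousWithinAt
    · intro x hx
      rw [interior_Ioi] at hx
      rw [(hK x hx).deriv]
      exact hKpos x hx


/-- For `d ≥ 1`, `κ_d(x) → 1` as `x → 0⁺` and `κ_d` is strictly increasing on `(0, ∞)`. -/
theorem kappa_tendsto_one_and_strictMono (d : ℕ) (hd : 1 ≤ d) :
    Tendsto (kappa d) (nhdsWithin 0 (Set.Ioi 0)) (nhds 1) ∧
      StrictMonoOn (kappa d) (Set.Ioi 0) :=
  kappa_tendsto_one_and_strictMono' d hd
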